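/- For a ≤ b, c ≤ e, and any (x1,x2,x3) ∈ ℕ^3 with x2 + b ≥ d: (x1,x2,x3)·3^a 2^b 3^c 1^d 2^e = (x1+d, x2+b−d+e, max(0, c−e, x3+a−b+c−e)). -/

import Mathlib

/-- Action of a letter of `{1,2,3}` (encoded as `Fin 3`) on a row identified
with its multiplicity vector `(x₁,x₂,x₃) ∈ ℕ³`. -/
def act3 (x : ℕ × ℕ × ℕ) (j : Fin 3) : ℕ × ℕ × ℕ :=
  if j = 0 then
    if 0 < x.2.1 then (x.1 + 1, x.2.1 - 1, x.2.2)
    else if 0 < x.2.2 then (x.1 + 1, x.2.1, x.2.2 - 1)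
    else (x.1 + 1, x.2.1, x.2.2)
  else if j = 1 then (x.1, x.2.1 + 1, x.2.2 - 1)
  else (x.1, x.2.1, x.2.2 + 1)

/-- Action of a word, composing letter actions from left to right. -/
def actW3 (x : ℕ × ℕ × ℕ) (w : List (Fin 3)) : ℕ × ℕ × ℕ :=
  w.foldl act3 x

lemma actW3_append (x : ℕ × ℕ × ℕ) (w1 w2 : List (Fin 3)) :
    actW3 x (w1 ++ w2) = actW3 (actW3 x w1) w2 := by
  simp [actW3, List.foldl_append]

lemma actW3_rep3 (x1 x2 x3 n : ℕ) :
    actW3 (x1, x2, x3) (List.replicate n 2) = (x1, x2, x3 + n) := by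
  induction n generalizing x3 with
  | zero => simp [actW3]
  | succ n ih =>
    rw [List.replicate_succ]
    show actW3 (act3 (x1, x2, x3) 2) (List.replicate n 2) = _
    have : act3 (x1, x2, x3) 2 = (x1, x2, x3 + 1) := by
      simp [act3, show (2 : Fin 3) ≠ 0 from by decide,
        show (2 : Fin 3) ≠ 1 from by decide]
    rw [this, ih]
    exact congrArg _ (congrArg _ (by omega))

lemma actW3_rep2 (x1 x2 x3 n : ℕ) :
    actW3 (x1, x2, x3) (List.replicate n 1) = (x1, x2 + n, x3 - n) := by
  induction n generalizing x2 x3 with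
  | zero => simp [actW3]
  | succ n ih =>
    rw [List.replicate_succ]
    show actW3 (act3 (x1, x2, x3) 1) (List.replicate n 1) = _
    have : act3 (x1, x2, x3) 1 = (x1, x2 + 1, x3 - 1) := by
      simp [act3, show (1 : Fin 3) ≠ 0 from by decide]
    rw [this, ih]
    refine Prod.ext rfl (Prod.ext ?_ ?_) <;> simp <;> omega

lemma actW3_rep1 (x1 x2 x3 n : ℕ) (h : n ≤ x2) :
    actW3 (x1, x2, x3) (List.replicate n 0) = (x1 + n, x2 - n, x3) := by
  induction n generalizing x1 x2 with
  | zero => simp [actW3]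
  | succ n ih =>
    rw [List.replicate_succ]
    show actW3 (act3 (x1, x2, x3) 0) (List.replicate n 0) = _
    have : act3 (x1, x2, x3) 0 = (x1 + 1, x2 - 1, x3) := by
      simp [act3, show 0 < x2 from by omega]
    rw [this, ih _ _ (by omega)]
    refine Prod.ext ?_ (Prod.ext ?_ rfl) <;> simp <;> omega

/-- explicit value of the action of `3^a 2^b 3^c 1^d 2^e`
when `x₂ + b ≥ d` (Case 1). -/
theorem act_case1 (a b c d e x1 x2 x3 : ℕ) (hab : a ≤ b) (hce : c ≤ e)
    (hx : d ≤ x2 + b) :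
    actW3 (x1, x2, x3)
        (List.replicate a 2 ++ List.replicate b 1 ++ List.replicate c 2 ++
          List.replicate d 0 ++ List.replicate e 1) =
      (x1 + d, x2 + b - d + e,
        (((c : ℤ) - e) ⊔ ((x3 : ℤ) + a - b + c - e)).toNat) := by
  rw [actW3_append, actW3_append, actW3_append, actW3_append,
    actW3_rep3 x1 x2 x3 a, actW3_rep2 x1 x2 (x3 + a) b,
    actW3_rep3 x1 (x2 + b) (x3 + a - b) c,
    actW3_rep1 x1 (x2 + b) (x3 + a - b + c) d hx,
    actW3_rep2 (x1 + d) (x2 + b - d) (x3 + a - b + c) e]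
  simp only [Prod.mk.injEq]
  refine ⟨trivial, trivial, ?_⟩
  omega
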